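/- Let u ∈ R^n be a vector with entries indexed by [n], and suppose a subset S ⊆ [n] has at most α·n elements consisting of 'corrupted' indices, with 0 < α < 1 and γ > 1 such that ⌈γαn⌉ ≤ n. Then among the ⌈γαn⌉ indices with largest magnitude entries of u, at least ⌈(γ−1)αn⌉ are not in S; consequently the ⌈γαn⌉-th largest magnitude of u is at most the ⌈(γ−1)αn⌉-th largest magnitude of the restriction of u to the complement of S. -/

import Mathlib

/-- The `k`-th largest element of a multiset of reals (`0` if out of range). -/
noncomputable def kthLargest (m : Multiset ℝ) (k : ℕ) : ℝ :=
  (m.sort (· ≤ ·)).getD ((m.sort (· ≤ ·)).length - k) 0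


lemma sorted_getD_ge {l : List ℝ} (hl : l.Pairwise (· ≤ ·)) {k : ℕ} (hk1 : 1 ≤ k)
    (hk2 : k ≤ l.length) {x : ℝ} (hc : k ≤ l.countP (fun y => decide (x ≤ y))) :
    x ≤ l.getD (l.length - k) 0 := by
  set d := l.length - k with hd
  have hdlt : d < l.length := by omega
  rw [List.getD_eq_getElem l 0 hdlt]
  by_contra h
  push_neg at h
  have key : l.countP (fun y => decide (x ≤ y)) ≤ k - 1 := by
    have hsplit := List.take_append_drop (d+1) l
    calc l.countP (fun y => decide (x ≤ y))
        = (l.take (d+1)).countP (fun y => decide (x ≤ y)) +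
          (l.drop (d+1)).countP (fun y => decide (x ≤ y)) := by
          rw [← List.countP_append, hsplit]
      _ = 0 + (l.drop (d+1)).countP (fun y => decide (x ≤ y)) := by
          congr 1
          rw [List.countP_eq_zero]
          intro a ha
          rw [List.mem_take_iff_getElem] at ha
          obtain ⟨i, hi, rfl⟩ := ha
          have hi' : i < l.length := lt_of_lt_of_le hi inf_le_right
          have : l[i] ≤ l[d] := by
            have := hl.rel_get_of_le (a := ⟨i, hi'⟩) (b := ⟨d, hdlt⟩)
              (by simp only [Fin.mk_le_mk]; omega)
            simpa using this
          simp only [decide_eq_true_eq, not_le]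
          exact lt_of_le_of_lt this h
      _ ≤ 0 + (l.drop (d+1)).length := by
          gcongr; exact List.countP_le_length
      _ = k - 1 := by rw [List.length_drop]; omega
  omega

lemma sorted_getD_le {l : List ℝ} (hl : l.Pairwise (· ≤ ·)) {k : ℕ} (hk1 : 1 ≤ k)
    (hk2 : k ≤ l.length) {x : ℝ}
    (hc : l.length - k + 1 ≤ l.countP (fun y => decide (y ≤ x))) :
    l.getD (l.length - k) 0 ≤ x := by
  set d := l.length - k with hd
  have hdlt : d < l.length := by omega
  rw [List.getD_eq_getElem l 0 hdlt]
  by_contra h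
  push_neg at h
  have key : l.countP (fun y => decide (y ≤ x)) ≤ d := by
    have hsplit := List.take_append_drop d l
    calc l.countP (fun y => decide (y ≤ x))
        = (l.take d).countP (fun y => decide (y ≤ x)) +
          (l.drop d).countP (fun y => decide (y ≤ x)) := by
          rw [← List.countP_append, hsplit]
      _ = (l.take d).countP (fun y => decide (y ≤ x)) + 0 := by
          congr 1
          rw [List.countP_eq_zero]
          intro a ha
          rw [List.mem_iff_getElem] at ha
          obtain ⟨i, hi, rfl⟩ := ha
          rw [List.getElem_drop]
          have hi' : d + i < l.length := by
            rw [List.length_drop] at hi; omega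
          have : l[d] ≤ l[d + i] := by
            have := hl.rel_get_of_le (a := ⟨d, hdlt⟩) (b := ⟨d + i, hi'⟩)
              (by simp only [Fin.mk_le_mk]; omega)
            simpa using this
          simp only [decide_eq_true_eq, not_le]
          exact lt_of_lt_of_le h this
      _ ≤ (l.take d).length + 0 := by gcongr; exact List.countP_le_length
      _ ≤ d := by rw [List.length_take]; omega
  omega

lemma kthLargest_ge (m : Multiset ℝ) (k : ℕ) (hk1 : 1 ≤ k) (hk2 : k ≤ Multiset.card m)
    (x : ℝ) (hc : k ≤ m.countP (fun y => x ≤ y)) : x ≤ kthLargest m k := by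
  unfold kthLargest
  apply sorted_getD_ge (Multiset.pairwise_sort _ _) hk1
  · rw [Multiset.length_sort]; exact hk2
  · have : Multiset.countP (fun y => x ≤ y) ↑(m.sort (· ≤ ·)) = m.countP (fun y => x ≤ y) := by
      rw [Multiset.sort_eq]
    rw [Multiset.coe_countP] at this
    omega

lemma kthLargest_le (m : Multiset ℝ) (k : ℕ) (hk1 : 1 ≤ k) (hk2 : k ≤ Multiset.card m)
    (x : ℝ) (hc : Multiset.card m - k + 1 ≤ m.countP (fun y => y ≤ x)) :
    kthLargest m k ≤ x := by
  unfold kthLargest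
  apply sorted_getD_le (Multiset.pairwise_sort _ _) hk1
  · rw [Multiset.length_sort]; exact hk2
  · have : Multiset.countP (fun y => y ≤ x) ↑(m.sort (· ≤ ·)) = m.countP (fun y => y ≤ x) := by
      rw [Multiset.sort_eq]
    rw [Multiset.coe_countP] at this
    rw [Multiset.length_sort]
    omega
/-- If at most `α·n` of the indices are corrupted (`S`), `γ > 1`, and `T` is a set
of `⌈γαn⌉` indices carrying the largest magnitudes of `u`, then at least
`⌈(γ−1)αn⌉` indices of `T` are uncorrupted; consequently the `⌈γαn⌉`-th largest
magnitude of `u` is at most the `⌈(γ−1)αn⌉`-th largest magnitude of `u`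
restricted to the complement of `S`. -/
theorem top_indices_uncorrupted {n : ℕ} (u : Fin n → ℝ) (S : Finset (Fin n))
    (α γ : ℝ) (hα0 : 0 < α) (hα1 : α < 1) (hγ : 1 < γ)
    (hS : (S.card : ℝ) ≤ α * n) (hk : ⌈γ * α * n⌉₊ ≤ n)
    (T : Finset (Fin n)) (hT : T.card = ⌈γ * α * n⌉₊)
    (htop : ∀ i ∈ T, ∀ j ∉ T, |u j| ≤ |u i|) :
    ⌈(γ - 1) * α * n⌉₊ ≤ (T \ S).card ∧
      kthLargest (Finset.univ.val.map fun i => |u i|) ⌈γ * α * n⌉₊ ≤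
        kthLargest ((Sᶜ).val.map fun i => |u i|) ⌈(γ - 1) * α * n⌉₊ := by
  set k := ⌈γ * α * n⌉₊ with hkdef
  set m := ⌈(γ - 1) * α * n⌉₊ with hmdef
  have hn0 : (0:ℝ) ≤ (n:ℝ) := Nat.cast_nonneg n
  have hγ1 : (0:ℝ) ≤ (γ - 1) * α * n := by
    apply mul_nonneg (mul_nonneg (by linarith) hα0.le) hn0
  have hmk : m + S.card ≤ k := by
    have h1 : (m : ℝ) < (γ - 1) * α * n + 1 := Nat.ceil_lt_add_one hγ1
    have h2 : γ * α * n ≤ (k : ℝ) := Nat.le_ceil _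
    have h3 : ((m + S.card : ℕ) : ℝ) < ((k + 1 : ℕ) : ℝ) := by
      push_cast
      nlinarith
    have h4 : m + S.card < k + 1 := by exact_mod_cast h3
    omega
  have hcard1 : m ≤ (T \ S).card := by
    have := Finset.le_card_sdiff S T
    omega
  refine ⟨hcard1, ?_⟩
  by_cases hn : n = 0
  · subst hn
    have hSe : S = ∅ := Finset.eq_empty_of_isEmpty S
    have hk0 : k = 0 := by omega
    have hm0 : m = 0 := by
      have : (T \ S).card = 0 := by
        have := Finset.card_le_univ (T \ S)
        simpa using this
      omega
    simp [kthLargest, hk0, hm0, hSe]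
  · have hn1 : 1 ≤ n := Nat.pos_of_ne_zero hn
    have hnpos : (0:ℝ) < (n:ℝ) := by exact_mod_cast hn1
    have hk1 : 1 ≤ k := Nat.ceil_pos.mpr (mul_pos (mul_pos (lt_trans zero_lt_one hγ) hα0) hnpos)
    have hm1 : 1 ≤ m := Nat.ceil_pos.mpr (mul_pos (mul_pos (sub_pos.mpr hγ) hα0) hnpos)
    set c := kthLargest (Finset.univ.val.map fun i => |u i|) k with hcdef
    have hcardfull : Multiset.card (Finset.univ.val.map fun i : Fin n => |u i|) = n := by
      simp
    have hclaim : ∀ i ∈ T, c ≤ |u i| := by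
      intro i hi
      apply kthLargest_le
      · exact hk1
      · rw [hcardfull]; exact hk
      · rw [hcardfull, Multiset.countP_map]
        have hsub : insert i Tᶜ ⊆ Finset.univ.filter (fun a => |u a| ≤ |u i|) := by
          intro j hj
          simp only [Finset.mem_insert, Finset.mem_compl] at hj
          simp only [Finset.mem_filter, Finset.mem_univ, true_and]
          rcases hj with rfl | hj
          · exact le_refl _
          · exact htop i hi j hj
        have hins : (insert i Tᶜ).card = n - k + 1 := by
          rw [Finset.card_insert_of_notMem (by simp [hi]), Finset.card_compl, hT]
          simp
        have hle := Finset.card_le_card hsub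
        rw [hins] at hle
        have : (Finset.univ.filter (fun a => |u a| ≤ |u i|)).card
            = Multiset.card (Multiset.filter (fun a => |u a| ≤ |u i|) Finset.univ.val) := by
          rfl
        omega
    have hScard : S.card ≤ n := by
      have := Finset.card_le_univ S
      simpa using this
    apply kthLargest_ge
    · exact hm1
    · rw [Multiset.card_map]
      have : (Sᶜ).card = n - S.card := by
        rw [Finset.card_compl]; simp
      rw [show Multiset.card (Sᶜ).val = (Sᶜ).card from rfl, this]
      omega
    · have hsubval : (T \ S).val ≤ (Sᶜ).val := by
        rw [Finset.val_le_iff]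
        intro j hj
        rw [Finset.mem_sdiff] at hj
        rw [Finset.mem_compl]
        exact hj.2
      have hmaple : (T \ S).val.map (fun i => |u i|) ≤ (Sᶜ).val.map (fun i => |u i|) :=
        Multiset.map_le_map hsubval
      have hcount1 : Multiset.countP (fun y => c ≤ y) ((T \ S).val.map fun i => |u i|)
          = (T \ S).card := by
        rw [Multiset.countP_eq_card.mpr, Multiset.card_map]
        · rfl
        · intro a ha
          rw [Multiset.mem_map] at ha
          obtain ⟨j, hj, rfl⟩ := ha
          have hjT : j ∈ T := (Finset.mem_sdiff.mp hj).1
          exact hclaim j hjT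
      have := Multiset.countP_le_of_le (fun y => c ≤ y) hmaple
      omega
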